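/- Let (η_k)_{k∈ℕ} be positive real numbers and (v_k)_{k∈ℕ} ⊂ ℝ³ vectors such that Σ_k (v_k · c)² ≤ θ|c|² for every c ∈ ℝ³, where 0 ≤ θ < 1, and let B(z) be the associated Zhikov function. Then for every z ∈ ℂ with Im z ≠ 0 the matrix B(z) is invertible, and its inverse satisfies the operator-norm bound ‖B(z)⁻¹‖ ≤ ((1 − θ)·|Im z|)⁻¹. -/

import Mathlib

open Finset

/-- **Invertibility of the Zhikov function off the real axis.** Given positive reals
`η_k` and vectors `v_k ∈ ℝ³` with `Σ_k (v_k·c)² ≤ θ|c|²` for all real `c`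
(with `0 ≤ θ < 1`), for every `z ∈ ℂ` with `Im z ≠ 0` the Zhikov matrix
`B(z)_{ij} = zδ_{ij} + Σ_k z²/(η_k − z)·(v_k)_i(v_k)_j` is invertible and
`‖B(z)⁻¹‖ ≤ ((1 − θ)|Im z|)⁻¹` in the Euclidean operator norm. -/
theorem zhikov_function_invertible
    (η : ℕ → ℝ) (hη : ∀ k, 0 < η k)
    (v : ℕ → Fin 3 → ℝ) (θ : ℝ) (hθ0 : 0 ≤ θ) (hθ1 : θ < 1)
    (hsummable : ∀ c : Fin 3 → ℝ, Summable fun k => (∑ i, v k i * c i) ^ 2)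
    (hbound : ∀ c : Fin 3 → ℝ, (∑' k, (∑ i, v k i * c i) ^ 2) ≤ θ * ∑ i, (c i) ^ 2)
    (z : ℂ) (hz : z.im ≠ 0)
    (B : Matrix (Fin 3) (Fin 3) ℂ)
    (hB : ∀ i j, B i j = (if i = j then z else 0) +
      ∑' k, z ^ 2 / ((η k : ℂ) - z) * (v k i : ℂ) * (v k j : ℂ)) :
    ∃ Binv : Matrix (Fin 3) (Fin 3) ℂ,
      B * Binv = 1 ∧ Binv * B = 1 ∧
      ∀ c : EuclideanSpace ℂ (Fin 3),
        ‖Matrix.toEuclideanLin Binv c‖ ≤ ((1 - θ) * |z.im|)⁻¹ * ‖c‖ := by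
  classical
  have hy0 : 0 < |z.im| := abs_pos.mpr hz
  have hθ' : 0 < 1 - θ := by linarith
  set t : ℕ → ℂ := fun k => z ^ 2 / ((η k : ℂ) - z) with htdef
  have hdne : ∀ k, ((η k : ℂ) - z) ≠ 0 := by
    intro k h
    have h2 := congrArg Complex.im h
    simp only [Complex.sub_im, Complex.ofReal_im, Complex.zero_im, zero_sub, neg_eq_zero] at h2
    exact hz h2
  -- norm bound on t
  have htnorm : ∀ k, ‖t k‖ ≤ ‖z‖ ^ 2 / |z.im| := by
    intro k
    have h1 : |z.im| ≤ ‖(η k : ℂ) - z‖ := by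
      have := Complex.abs_im_le_norm ((η k : ℂ) - z)
      simpa [Complex.sub_im, abs_neg] using this
    rw [htdef, norm_div, norm_pow]
    exact div_le_div_of_nonneg_left (by positivity) hy0 h1
  -- imaginary part bound on t
  have htim : ∀ k, -(z.im ^ 2) ≤ z.im * (t k).im := by
    intro k
    have hpos : 0 < Complex.normSq ((η k : ℂ) - z) := Complex.normSq_pos.mpr (hdne k)
    have him : (t k).im = ((z ^ 2).im * ((η k : ℂ) - z).re - (z ^ 2).re * ((η k : ℂ) - z).im)
        / Complex.normSq ((η k : ℂ) - z) := by
      rw [htdef]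
      rw [Complex.div_im]
      ring
    have key : z.im * (t k).im * Complex.normSq ((η k : ℂ) - z)
        = (z.im * η k) ^ 2 - z.im ^ 2 * Complex.normSq ((η k : ℂ) - z) := by
      rw [him, mul_div_assoc', div_mul_cancel₀ _ (ne_of_gt hpos)]
      simp only [Complex.normSq_apply, Complex.sub_re, Complex.sub_im, Complex.ofReal_re,
        Complex.ofReal_im, pow_two, Complex.mul_re, Complex.mul_im]
      ring
    nlinarith [sq_nonneg (z.im * η k), hpos]
  -- summability facts
  have hv2 : ∀ i, Summable fun k => (v k i) ^ 2 := by
    intro i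
    have h := hsummable (fun j => if j = i then 1 else 0)
    simpa [mul_ite, Finset.sum_ite_eq'] using h
  have habs : ∀ i j, Summable fun k => |v k i * v k j| := by
    intro i j
    refine Summable.of_nonneg_of_le (fun k => abs_nonneg _) (fun k => ?_)
      (((hv2 i).add (hv2 j)).div_const 2)
    rw [abs_mul]
    nlinarith [sq_nonneg (|v k i| - |v k j|), sq_abs (v k i), sq_abs (v k j)]
  have hts : ∀ i j, Summable fun k => t k * (v k i : ℂ) * (v k j : ℂ) := by
    intro i j
    apply Summable.of_norm
    refine Summable.of_nonneg_of_le (fun k => norm_nonneg _) (fun k => ?_)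
      ((habs i j).mul_left (‖z‖ ^ 2 / |z.im|))
    simp only [norm_mul, Complex.norm_real, Real.norm_eq_abs, abs_mul]
    rw [mul_assoc]
    exact mul_le_mul_of_nonneg_right (htnorm k) (by positivity)
  -- the key coercivity estimate
  have hK : ∀ c : EuclideanSpace ℂ (Fin 3),
      (1 - θ) * |z.im| * ‖c‖ ≤ ‖Matrix.toEuclideanLin B c‖ := by
    intro c
    set w : ℕ → ℂ := fun k => ∑ i, (v k i : ℂ) * c i with hwdef
    set S : ℝ := ∑ i, Complex.normSq (c i) with hSdef
    have hwre : ∀ k, (w k).re = ∑ i, v k i * (c i).re := by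
      intro k
      rw [hwdef, Complex.re_sum]
      exact Finset.sum_congr rfl fun i _ => by
        simp [Complex.mul_re, Complex.ofReal_re, Complex.ofReal_im]
    have hwim : ∀ k, (w k).im = ∑ i, v k i * (c i).im := by
      intro k
      rw [hwdef, Complex.im_sum]
      exact Finset.sum_congr rfl fun i _ => by
        simp [Complex.mul_im, Complex.ofReal_re, Complex.ofReal_im]
    have hnsw : ∀ k, Complex.normSq (w k)
        = (∑ i, v k i * (c i).re) ^ 2 + (∑ i, v k i * (c i).im) ^ 2 := by
      intro k
      rw [Complex.normSq_apply, hwre, hwim]; ring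
    have hw2 : Summable fun k => Complex.normSq (w k) :=
      (((hsummable fun i => (c i).re).add (hsummable fun i => (c i).im)).congr
        fun k => (hnsw k).symm)
    have hSsplit : S = (∑ i, ((c i).re) ^ 2) + ∑ i, ((c i).im) ^ 2 := by
      rw [hSdef, ← Finset.sum_add_distrib]
      exact Finset.sum_congr rfl fun i _ => by rw [Complex.normSq_apply]; ring
    have hw2sum : ∑' k, Complex.normSq (w k) ≤ θ * S := by
      calc ∑' k, Complex.normSq (w k)
          = (∑' k, (∑ i, v k i * (c i).re) ^ 2) + ∑' k, (∑ i, v k i * (c i).im) ^ 2 := by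
            rw [← Summable.tsum_add (hsummable _) (hsummable _)]
            exact tsum_congr hnsw
        _ ≤ θ * (∑ i, ((c i).re) ^ 2) + θ * (∑ i, ((c i).im) ^ 2) :=
            add_le_add (hbound _) (hbound _)
        _ = θ * S := by rw [hSsplit]; ring
    have htw : Summable fun k => t k * (Complex.normSq (w k) : ℂ) := by
      apply Summable.of_norm
      refine Summable.of_nonneg_of_le (fun k => norm_nonneg _) (fun k => ?_)
        (hw2.mul_left (‖z‖ ^ 2 / |z.im|))
      rw [norm_mul, Complex.norm_real, Real.norm_eq_abs, abs_of_nonneg (Complex.normSq_nonneg _)]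
      exact mul_le_mul_of_nonneg_right (htnorm k) (Complex.normSq_nonneg _)
    set q : ℂ := ∑ i, ∑ j, (starRingEnd ℂ) (c i) * B i j * c j with hqdef
    -- identify q with the inner product
    have hinner : (inner ℂ c (Matrix.toEuclideanLin B c) : ℂ) = q := by
      rw [hqdef, PiLp.inner_apply]
      refine Finset.sum_congr rfl fun i _ => ?_
      have happ : (Matrix.toEuclideanLin B c) i = ∑ j, B i j * c j := by
        rw [Matrix.toEuclideanLin_apply]
        simp [Matrix.mulVec, dotProduct]
      rw [RCLike.inner_apply', happ, Finset.mul_sum]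
      exact Finset.sum_congr rfl fun j _ => by ring
    -- compute q
    have hq : q = z * (S : ℂ) + ∑' k, t k * (Complex.normSq (w k) : ℂ) := by
      have hBt : ∀ i j, B i j = (if i = j then z else 0) +
          ∑' k, t k * (v k i : ℂ) * (v k j : ℂ) := hB
      have hsplit : ∀ i j, (starRingEnd ℂ) (c i) * B i j * c j
          = (if i = j then (starRingEnd ℂ) (c i) * z * c j else 0)
            + ∑' k, (starRingEnd ℂ) (c i) * (t k * (v k i : ℂ) * (v k j : ℂ)) * c j := by
        intro i j
        rw [hBt i j, mul_add, add_mul]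
        congr 1
        · split <;> ring
        · rw [tsum_mul_right, tsum_mul_left]
      have hdiag : (∑ i, (starRingEnd ℂ) (c i) * z * c i) = z * (S : ℂ) := by
        have : ((S : ℝ) : ℂ) = ∑ i, (Complex.normSq (c i) : ℂ) := by
          rw [hSdef]; push_cast; rfl
        rw [this, Finset.mul_sum]
        refine Finset.sum_congr rfl fun i _ => ?_
        rw [mul_comm ((starRingEnd ℂ) (c i)) z, mul_assoc, mul_comm ((starRingEnd ℂ) (c i)) (c i),
          Complex.mul_conj]
      have hg : ∀ i j, Summable fun k =>
          (starRingEnd ℂ) (c i) * (t k * (v k i : ℂ) * (v k j : ℂ)) * c j := by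
        intro i j
        exact ((hts i j).mul_left ((starRingEnd ℂ) (c i))).mul_right (c j)
      have hswap : (∑ i, ∑ j, ∑' k, (starRingEnd ℂ) (c i) * (t k * (v k i : ℂ) * (v k j : ℂ)) * c j)
          = ∑' k, ∑ i, ∑ j, (starRingEnd ℂ) (c i) * (t k * (v k i : ℂ) * (v k j : ℂ)) * c j := by
        rw [Summable.tsum_finsetSum (fun i _ => summable_sum fun j _ => hg i j)]
        exact Finset.sum_congr rfl fun i _ => (Summable.tsum_finsetSum fun j _ => hg i j).symm
      have hfk : ∀ k, (∑ i, ∑ j, (starRingEnd ℂ) (c i) * (t k * (v k i : ℂ) * (v k j : ℂ)) * c j)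
          = t k * (Complex.normSq (w k) : ℂ) := by
        intro k
        have hcw : (starRingEnd ℂ) (w k) = ∑ i, (v k i : ℂ) * (starRingEnd ℂ) (c i) := by
          rw [hwdef, map_sum]
          exact Finset.sum_congr rfl fun i _ => by
            rw [map_mul, Complex.conj_ofReal]
        have h0 : t k * (Complex.normSq (w k) : ℂ)
            = t k * ((starRingEnd ℂ) (w k) * w k) := by
          rw [mul_comm ((starRingEnd ℂ) (w k)) (w k), Complex.mul_conj]
        rw [h0, hcw]
        simp only [hwdef]
        rw [Finset.sum_mul_sum, Finset.mul_sum]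
        refine Finset.sum_congr rfl fun i _ => ?_
        rw [Finset.mul_sum]
        exact Finset.sum_congr rfl fun j _ => by ring
      calc q = (∑ i, ∑ j, ((if i = j then (starRingEnd ℂ) (c i) * z * c j else 0)
            + ∑' k, (starRingEnd ℂ) (c i) * (t k * (v k i : ℂ) * (v k j : ℂ)) * c j)) := by
            rw [hqdef]
            exact Finset.sum_congr rfl fun i _ => Finset.sum_congr rfl fun j _ => hsplit i j
        _ = (∑ i, ∑ j, (if i = j then (starRingEnd ℂ) (c i) * z * c j else 0))
            + ∑ i, ∑ j, ∑' k, (starRingEnd ℂ) (c i) * (t k * (v k i : ℂ) * (v k j : ℂ)) * c j := by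
            rw [← Finset.sum_add_distrib]
            exact Finset.sum_congr rfl fun i _ => Finset.sum_add_distrib
        _ = z * (S : ℂ) + ∑' k, t k * (Complex.normSq (w k) : ℂ) := by
            rw [hswap, tsum_congr hfk, ← hdiag]
            congr 1
            exact Finset.sum_congr rfl fun i _ => by simp
    -- imaginary part estimate
    have hqim : q.im = z.im * S + ∑' k, (t k).im * Complex.normSq (w k) := by
      rw [hq, Complex.add_im, Complex.im_tsum htw]
      congr 1
      · simp [Complex.mul_im]
      · exact tsum_congr fun k => by simp [Complex.mul_im]
    have hts2 : Summable fun k => (t k).im * Complex.normSq (w k) := by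
      have := (Complex.hasSum_im htw.hasSum).summable
      refine this.congr fun k => ?_
      simp [Complex.mul_im]
    have hT : -(z.im ^ 2) * (θ * S) ≤ z.im * ∑' k, (t k).im * Complex.normSq (w k) := by
      have h1 : z.im * ∑' k, (t k).im * Complex.normSq (w k)
          = ∑' k, z.im * ((t k).im * Complex.normSq (w k)) := (tsum_mul_left).symm
      have h2 : ∑' k, (-(z.im ^ 2)) * Complex.normSq (w k)
          ≤ ∑' k, z.im * ((t k).im * Complex.normSq (w k)) := by
        refine Summable.tsum_le_tsum (fun k => ?_) (hw2.mul_left _) (hts2.mul_left _)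
        have := mul_le_mul_of_nonneg_right (htim k) (Complex.normSq_nonneg (w k))
        calc -(z.im ^ 2) * Complex.normSq (w k) ≤ z.im * (t k).im * Complex.normSq (w k) := this
          _ = z.im * ((t k).im * Complex.normSq (w k)) := by ring
      have h3 : ∑' k, (-(z.im ^ 2)) * Complex.normSq (w k)
          = -(z.im ^ 2) * ∑' k, Complex.normSq (w k) := tsum_mul_left
      have h4 : -(z.im ^ 2) * (θ * S) ≤ -(z.im ^ 2) * ∑' k, Complex.normSq (w k) :=
        mul_le_mul_of_nonpos_left hw2sum (by nlinarith [sq_nonneg z.im])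
      linarith
    have hmainim : (1 - θ) * z.im ^ 2 * S ≤ z.im * q.im := by
      have : z.im * q.im = z.im ^ 2 * S + z.im * ∑' k, (t k).im * Complex.normSq (w k) := by
        rw [hqim]; ring
      nlinarith
    -- norms
    have hnc : ‖c‖ ^ 2 = S := by
      rw [EuclideanSpace.norm_eq, Real.sq_sqrt (Finset.sum_nonneg fun i _ => sq_nonneg _), hSdef]
      exact Finset.sum_congr rfl fun i _ => by
        rw [Complex.sq_norm]
    have hcs : ‖q‖ ≤ ‖c‖ * ‖Matrix.toEuclideanLin B c‖ := by
      rw [← hinner]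
      exact norm_inner_le_norm _ _
    have himq : z.im * q.im ≤ |z.im| * ‖q‖ := by
      calc z.im * q.im ≤ |z.im * q.im| := le_abs_self _
        _ = |z.im| * |q.im| := abs_mul _ _
        _ ≤ |z.im| * ‖q‖ := by
            refine mul_le_mul_of_nonneg_left ?_ (abs_nonneg _)
            exact Complex.abs_im_le_norm q
    rcases eq_or_ne c 0 with rfl | hc0
    · simp
    have hcpos : 0 < ‖c‖ := norm_pos_iff.mpr hc0
    have hchain : (1 - θ) * z.im ^ 2 * S ≤ |z.im| * (‖c‖ * ‖Matrix.toEuclideanLin B c‖) := by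
      have := mul_le_mul_of_nonneg_left hcs (abs_nonneg z.im)
      linarith
    have hsq : |z.im| ^ 2 = z.im ^ 2 := sq_abs z.im
    have hmul : (1 - θ) * |z.im| * ‖c‖ * (|z.im| * ‖c‖)
        ≤ ‖Matrix.toEuclideanLin B c‖ * (|z.im| * ‖c‖) := by
      have e1 : (1 - θ) * |z.im| * ‖c‖ * (|z.im| * ‖c‖) = (1 - θ) * z.im ^ 2 * S := by
        rw [← hnc, ← hsq]; ring
      have e2 : |z.im| * (‖c‖ * ‖Matrix.toEuclideanLin B c‖)
          = ‖Matrix.toEuclideanLin B c‖ * (|z.im| * ‖c‖) := by ring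
      rw [e1]
      exact hchain.trans (le_of_eq e2)
    exact le_of_mul_le_mul_right hmul (by positivity)
  -- invertibility
  have hdet : B.det ≠ 0 := by
    intro h
    obtain ⟨c, hc0, hBc⟩ := (Matrix.exists_mulVec_eq_zero_iff).mpr h
    set c' : EuclideanSpace ℂ (Fin 3) := (WithLp.equiv 2 (Fin 3 → ℂ)).symm c with hc'
    have hzero : Matrix.toEuclideanLin B c' = 0 := by
      rw [hc', WithLp.equiv_symm_apply, Matrix.toEuclideanLin_apply_piLp_toLp, hBc]
      simp
    have hc'0 : c' ≠ 0 := by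
      intro h0
      apply hc0
      have := congrArg (WithLp.equiv 2 (Fin 3 → ℂ)) h0
      simpa [hc'] using this
    have h1 := hK c'
    rw [hzero, norm_zero] at h1
    have h2 : 0 < ‖c'‖ := norm_pos_iff.mpr hc'0
    nlinarith [mul_pos (mul_pos hθ' hy0) h2]
  have hU : IsUnit B.det := isUnit_iff_ne_zero.mpr hdet
  refine ⟨B⁻¹, Matrix.mul_nonsing_inv B hU, Matrix.nonsing_inv_mul B hU, fun c => ?_⟩
  have hid : Matrix.toEuclideanLin B (Matrix.toEuclideanLin B⁻¹ c) = c := by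
    rw [Matrix.toEuclideanLin_apply, Matrix.toEuclideanLin_apply]
    simp only [Equiv.apply_symm_apply, Matrix.mulVec_mulVec, Matrix.mul_nonsing_inv B hU,
      Matrix.one_mulVec, Equiv.symm_apply_apply]
  have hD := hK (Matrix.toEuclideanLin B⁻¹ c)
  rw [hid] at hD
  have hpos : 0 < (1 - θ) * |z.im| := mul_pos hθ' hy0
  rw [inv_mul_eq_div, le_div_iff₀ hpos]
  exact (mul_comm _ _).trans_le hD
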